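/- Let I be a finite index set, (w'_{ij})_{(i,j)∈I} nonnegative weights summing to 1, fix (i*,j*) ∈ I, and let (ŵ_{ij})_{(i,j)∈I\{(i*,j*)}} with ŵ_{ij} ≤ w'_{ij} for all (i,j) ≠ (i*,j*), and ŵ_test ≥ w'_{i*j*} with Σ ŵ_{ij} + ŵ_test = 1. Then for any residuals R_{ij} ∈ ℝ and any α ∈ (0,1), Quantile_{1-α}(Σ_{(i,j)≠(i*,j*)} ŵ_{ij} δ_{R_{ij}} + ŵ_test δ_{+∞}) ≥ Quantile_{1-α}(Σ_{(i,j)∈I} w'_{ij} δ_{R_{ij}}). -/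
import Mathlib


open MeasureTheory Finset

lemma dirac_smul_toReal (w : ℝ) (hw : 0 ≤ w) (a t : ℝ) :
    ((ENNReal.ofReal w • Measure.dirac a : Measure ℝ) (Set.Iic t)).toReal
      = if a ≤ t then w else 0 := by
  rw [Measure.smul_apply, smul_eq_mul, Measure.dirac_apply' _ measurableSet_Iic]
  by_cases h : a ≤ t
  · simp [Set.indicator_apply, h, ENNReal.toReal_ofReal hw]
  · simp [Set.indicator_apply, h]

lemma sum_dirac_toReal {I : Type*} (s : Finset I) (w : I → ℝ) (hw : ∀ i, 0 ≤ w i)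
    (R : I → ℝ) (t : ℝ) :
    ((∑ i ∈ s, ENNReal.ofReal (w i) • Measure.dirac (R i) : Measure ℝ) (Set.Iic t)).toReal
      = ∑ i ∈ s, if R i ≤ t then w i else 0 := by
  rw [Measure.finset_sum_apply, ENNReal.toReal_sum]
  · exact Finset.sum_congr rfl fun i _ => dirac_smul_toReal (w i) (hw i) (R i) t
  · intro i _
    rw [Measure.smul_apply, smul_eq_mul]
    exact ENNReal.mul_ne_top ENNReal.ofReal_ne_top (by
      exact measure_ne_top _ _)

lemma meas_ne_top {I : Type*} (s : Finset I) (w : I → ℝ) (R : I → ℝ) (t : ℝ) :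
    (∑ i ∈ s, ENNReal.ofReal (w i) • Measure.dirac (R i) : Measure ℝ) (Set.Iic t) ≠ ⊤ := by
  rw [Measure.finset_sum_apply]
  exact ENNReal.sum_ne_top.2 fun i _ => by
    rw [Measure.smul_apply, smul_eq_mul]
    exact ENNReal.mul_ne_top ENNReal.ofReal_ne_top
      (measure_ne_top _ _)

/-- replacing the test point's mass by a point mass beyond all residuals and
shrinking the calibration weights only increases the (1-α)-quantile. -/
theorem quantile_conservative_one_shot {I : Type*} [Fintype I] [DecidableEq I]
    (w' : I → ℝ) (istar : I)
    (hw'nn : ∀ i, 0 ≤ w' i) (hw'1 : ∑ i, w' i = 1)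
    (what : I → ℝ) (wtest : ℝ)
    (hwhatnn : ∀ i, 0 ≤ what i)
    (hle : ∀ i, i ≠ istar → what i ≤ w' i) (hge : w' istar ≤ wtest)
    (hsum : (∑ i ∈ Finset.univ.erase istar, what i) + wtest = 1)
    (R : I → ℝ) (tinf : ℝ) (htinf : ∀ i, R i < tinf)
    (α : ℝ) (hα : α ∈ Set.Ioo (0:ℝ) 1) :
    sInf {t : ℝ | 1 - α ≤
        ((∑ i, ENNReal.ofReal (w' i) • Measure.dirac (R i) : Measure ℝ) (Set.Iic t)).toReal} ≤
      sInf {t : ℝ | 1 - α ≤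
        (((∑ i ∈ Finset.univ.erase istar, ENNReal.ofReal (what i) • Measure.dirac (R i)
            : Measure ℝ) + ENNReal.ofReal wtest • Measure.dirac tinf)
          (Set.Iic t)).toReal} := by
  obtain ⟨hα0, hα1⟩ := hα
  have hwtest : 0 ≤ wtest := le_trans (hw'nn istar) hge
  -- formula for the second measure
  have hG : ∀ t : ℝ,
      (((∑ i ∈ Finset.univ.erase istar, ENNReal.ofReal (what i) • Measure.dirac (R i)
          : Measure ℝ) + ENNReal.ofReal wtest • Measure.dirac tinf) (Set.Iic t)).toReal
      = (∑ i ∈ Finset.univ.erase istar, if R i ≤ t then what i else 0)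
          + (if tinf ≤ t then wtest else 0) := by
    intro t
    rw [Measure.add_apply, ENNReal.toReal_add (meas_ne_top _ _ _ _), sum_dirac_toReal _ _ hwhatnn,
      dirac_smul_toReal _ hwtest]
    rw [Measure.smul_apply, smul_eq_mul]
    exact ENNReal.mul_ne_top ENNReal.ofReal_ne_top
      (measure_ne_top _ _)
  have hF : ∀ t : ℝ,
      ((∑ i, ENNReal.ofReal (w' i) • Measure.dirac (R i) : Measure ℝ) (Set.Iic t)).toReal
      = ∑ i, if R i ≤ t then w' i else 0 := fun t => sum_dirac_toReal _ _ hw'nn R t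
  haveI : Nonempty I := ⟨istar⟩
  set m := Finset.univ.inf' Finset.univ_nonempty R with hm
  apply csInf_le_csInf
  · -- bdd below
    refine ⟨m, fun t ht => ?_⟩
    simp only [Set.mem_setOf_eq, hF] at ht
    by_contra hlt
    push_neg at hlt
    have : (∑ i, if R i ≤ t then w' i else 0) = 0 := by
      apply Finset.sum_eq_zero
      intro i _
      have : ¬ R i ≤ t := not_le.2 (lt_of_lt_of_le hlt (Finset.inf'_le _ (mem_univ i)))
      simp [this]
    rw [this] at ht
    linarith
  · -- nonempty
    refine ⟨tinf, ?_⟩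
    simp only [Set.mem_setOf_eq, hG]
    have h1 : (∑ i ∈ Finset.univ.erase istar, if R i ≤ tinf then what i else 0)
        = ∑ i ∈ Finset.univ.erase istar, what i := by
      exact Finset.sum_congr rfl fun i _ => by simp [(htinf i).le]
    rw [h1, if_pos le_rfl, hsum]
    linarith
  · -- subset
    intro t ht
    simp only [Set.mem_setOf_eq, hG] at ht
    simp only [Set.mem_setOf_eq, hF]
    by_cases hcase : tinf ≤ t
    · have : (∑ i, if R i ≤ t then w' i else 0) = ∑ i, w' i :=
        Finset.sum_congr rfl fun i _ => by simp [le_trans (htinf i).le hcase]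
      rw [this, hw'1]; linarith
    · rw [if_neg hcase, add_zero] at ht
      refine le_trans ht ?_
      calc (∑ i ∈ Finset.univ.erase istar, if R i ≤ t then what i else 0)
          ≤ ∑ i ∈ Finset.univ.erase istar, if R i ≤ t then w' i else 0 := by
            apply Finset.sum_le_sum
            intro i hi
            have := hle i (Finset.ne_of_mem_erase hi)
            split_ifs <;> simp [this]
        _ ≤ ∑ i, if R i ≤ t then w' i else 0 := by
            apply Finset.sum_le_sum_of_subset_of_nonneg (Finset.erase_subset _ _)
            intro i _ _
            split_ifs <;> simp [hw'nn i]
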